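/- For every n ≥ 3 with n ≡ 3 (mod 4), the alternating configuration of n pegs can be sorted using exactly ⌊n/2⌋ Berge 1-moves. Specifically, writing n = 4i+3, the sequence of 1-moves given (in destination–source concatenated notation) by {4i+4, 3, 4i+2, 5, 4i, 7, 4i−2, 9, ..., 2i+4, 1} sorts the string; hence h(n,1) = ⌊n/2⌋ for n ≡ 3 (mod 4). -/
import Mathlib


/-- A board configuration has finite support: only finitely many positions hold pegs. -/
def FinSupp (c : ℤ → Option Bool) : Prop := {p : ℤ | (c p).isSome}.Finite

/-- The disorder: number of pegs `p` such that it is NOT the case that the next peg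
to the right of `p` exists and has the same color. -/
noncomputable def disorder (c : ℤ → Option Bool) : ℕ :=
  Set.ncard {p : ℤ | (c p).isSome ∧
    ¬ ∃ q : ℤ, p < q ∧ c q = c p ∧ ∀ r : ℤ, p < r → r < q → c r = none}

/-- A Berge `k`-move taking the `k` pegs at positions `i, i+1, ..., i+k-1` to the
`k` vacant positions `j, j+1, ..., j+k-1`, preserving order. -/
def MoveTo (k : ℕ) (i j : ℤ) (c c' : ℤ → Option Bool) : Prop :=
  (j + k ≤ i ∨ i + k ≤ j) ∧
  (∀ t : ℤ, 0 ≤ t → t < k → (c (i + t)).isSome ∧ c (j + t) = none) ∧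
  c' = fun p => if j ≤ p ∧ p < j + k then c (i + (p - j))
    else if i ≤ p ∧ p < i + k then none else c p

/-- A Berge `k`-move from some source to some destination. -/
def BergeMove (k : ℕ) (c c' : ℤ → Option Bool) : Prop :=
  ∃ i j : ℤ, MoveTo k i j c c'

/-- The alternating configuration of `n` pegs: pegs at positions `1,...,n`,
white (`true`) at odd positions and black (`false`) at even positions. -/
def altConfig (n : ℕ) : ℤ → Option Bool :=
  fun p => if 1 ≤ p ∧ p ≤ (n : ℤ) then some (decide (p % 2 = 1)) else none

/-- A sorted configuration of `n` pegs: a contiguous block of `n` pegs, the first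
`⌈n/2⌉` of one color, followed by the remaining `⌊n/2⌋` of the other color. -/
def IsSorted (n : ℕ) (c : ℤ → Option Bool) : Prop :=
  ∃ j : ℤ, ∃ w : Bool,
    (∀ p : ℤ, (c p).isSome ↔ (j ≤ p ∧ p < j + (n : ℤ))) ∧
    (∀ p : ℤ, j ≤ p → p < j + (((n + 1) / 2 : ℕ) : ℤ) → c p = some w) ∧
    (∀ p : ℤ, j + (((n + 1) / 2 : ℕ) : ℤ) ≤ p → p < j + (n : ℤ) → c p = some (!w))

/-- The alternating configuration of `n` pegs can be sorted in `m` Berge `k`-moves. -/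
def SortsIn (k n m : ℕ) : Prop :=
  ∃ f : ℕ → (ℤ → Option Bool), f 0 = altConfig n ∧
    (∀ i < m, BergeMove k (f i) (f (i + 1))) ∧ IsSorted n (f m)

set_option linter.unreachableTactic false
set_option linter.unusedTactic false
set_option linter.unusedVariables false

def Bad (c : ℤ → Option Bool) : Set ℤ :=
  {p : ℤ | (c p).isSome ∧ ¬ ∃ q : ℤ, p < q ∧ c q = c p ∧
    ∀ r : ℤ, p < r → r < q → c r = none}

lemma disorder_eq_bad (c : ℤ → Option Bool) : disorder c = (Bad c).ncard := rfl

lemma moveTo_one_spec {i j : ℤ} {c c' : ℤ → Option Bool} (h : MoveTo 1 i j c c') :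
    i ≠ j ∧ (c i).isSome ∧ c j = none ∧
      ∀ p, c' p = if p = j then c i else if p = i then none else c p := by
  obtain ⟨hsep, hocc, hval⟩ := h
  push_cast at hsep
  have h0 := hocc 0 le_rfl (by exact_mod_cast zero_lt_one)
  rw [add_zero, add_zero] at h0
  refine ⟨by omega, h0.1, h0.2, fun p => ?_⟩
  rw [hval]
  show (if j ≤ p ∧ p < j + ((1:ℕ):ℤ) then c (i + (p - j))
    else if i ≤ p ∧ p < i + ((1:ℕ):ℤ) then none else c p) = _
  push_cast
  split_ifs <;> first | rfl | omega | (congr 1; omega) |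
    (exfalso; omega)

lemma drop2 {c c' : ℤ → Option Bool} (hfin : FinSupp c) (h : BergeMove 1 c c') :
    disorder c ≤ disorder c' + 2 := by
  classical
  obtain ⟨i, j, hm⟩ := h
  obtain ⟨hij, hci, hcj, hc'⟩ := moveTo_one_spec hm
  have hc'j : c' j = c i := by rw [hc' j, if_pos rfl]
  have hc'i : c' i = none := by rw [hc' i, if_neg hij, if_pos rfl]
  have hc'other : ∀ p, p ≠ i → p ≠ j → c' p = c p := fun p hpi hpj => by
    rw [hc' p, if_neg hpj, if_neg hpi]
  set B := Bad c with hB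
  set B' := Bad c' with hB'
  have hBfin : B.Finite := hfin.subset (fun p hp => hp.1)
  have hB'fin : B'.Finite := by
    apply Set.Finite.subset (hfin.union (Set.finite_singleton j))
    intro p hp
    by_cases hpj : p = j
    · exact Or.inr hpj
    · left
      by_cases hpi : p = i
      · exfalso; have := hp.1; rw [hpi, hc'i] at this; simp at this
      · have := hp.1; rwa [hc'other p hpi hpj] at this
  set P : Set ℤ := {p | p ∈ B ∧ p < i ∧ ∀ r, p < r → r < i → c r = none} with hP
  have hPsub : P.Subsingleton := by
    intro a ha b hb
    by_contra hne
    rcases lt_or_gt_of_ne hne with hlt | hlt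
    · have h1 := ha.2.2 b hlt hb.2.1
      have h2 : (c b).isSome := hb.1.1
      rw [h1] at h2; simp at h2
    · have h1 := hb.2.2 a hlt ha.2.1
      have h2 : (c a).isSome := ha.1.1
      rw [h1] at h2; simp at h2
  set S : Set ℤ := B \ ({i} ∪ P) with hS
  -- key analysis
  have key : ∀ p ∈ S, p ∉ B' → (p < j ∧ (∀ r, p < r → r < j → r ≠ i → c r = none)
      ∧ j ∈ B') := by
    intro p hpS hpB'
    obtain ⟨hpB, hpNot⟩ := hpS
    have hpi : p ≠ i := fun e => hpNot (Or.inl e)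
    have hpP : p ∉ P := fun e => hpNot (Or.inr e)
    have hpocc : (c p).isSome := hpB.1
    have hpbad := hpB.2
    have hpj : p ≠ j := fun e => by rw [e, hcj] at hpocc; simp at hpocc
    have hc'p : c' p = c p := hc'other p hpi hpj
    have hexq : ∃ q, p < q ∧ c' q = c' p ∧ ∀ r, p < r → r < q → c' r = none := by
      by_contra hno
      exact hpB' ⟨by rw [hc'p]; exact hpocc, hno⟩
    obtain ⟨q, hpq, hq, hgap⟩ := hexq
    have hqi : q ≠ i := by
      intro e; rw [e, hc'i] at hq; rw [hc'p] at hq; rw [← hq] at hpocc; simp at hpocc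
    by_cases hqj : q = j
    · rw [hqj] at hpq hq hgap
      have hcij : c i = c p := by rw [hc'j, hc'p] at hq; exact hq
      have hiout : ¬ (p < i ∧ i < j) := by
        rintro ⟨h1, h2⟩
        apply hpbad
        refine ⟨i, h1, hcij, fun r hr1 hr2 => ?_⟩
        have := hgap r hr1 (by omega)
        rwa [hc'other r (by omega) (by omega)] at this
      have hgapc : ∀ r, p < r → r < j → r ≠ i → c r = none := fun r h1 h2 hri => by
        have := hgap r h1 h2
        rwa [hc'other r hri (by omega)] at this
      refine ⟨hpq, hgapc, ?_⟩
      refine ⟨by rw [hc'j]; exact hci, ?_⟩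
      rintro ⟨q', hjq', hq', hgap'⟩
      have hq'i : q' ≠ i := by
        intro e; rw [e, hc'i] at hq'; rw [hc'j] at hq'
        rw [← hq'] at hci; simp at hci
      have hcq' : c q' = c p := by
        rw [← hc'other q' hq'i (by omega), hq', hc'j, hcij]
      by_cases hiin : j < i ∧ i < q'
      · apply hpbad
        refine ⟨i, by omega, hcij, fun r h1 h2 => ?_⟩
        by_cases hrj : r = j
        · rw [hrj]; exact hcj
        · rcases lt_or_gt_of_ne hrj with hh | hh
          · exact hgapc r h1 hh (by omega)
          · have := hgap' r hh (by omega)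
            rwa [hc'other r (by omega) hrj] at this
      · apply hpbad
        refine ⟨q', by omega, hcq', fun r h1 h2 => ?_⟩
        have hri : r ≠ i := by omega
        by_cases hrj : r = j
        · rw [hrj]; exact hcj
        · rcases lt_or_gt_of_ne hrj with hh | hh
          · exact hgapc r h1 hh hri
          · have := hgap' r hh h2
            rwa [hc'other r hri hrj] at this
    · have hcq : c q = c p := by rw [← hc'other q hqi hqj, hq, hc'p]
      by_cases hiin : p < i ∧ i < q
      · exfalso
        apply hpP
        refine ⟨hpB, hiin.1, fun r h1 h2 => ?_⟩
        have := hgap r h1 (by omega)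
        by_cases hrj : r = j
        · rw [hrj]; exact hcj
        · rwa [hc'other r (by omega) hrj] at this
      · exfalso
        apply hpbad
        refine ⟨q, hpq, hcq, fun r h1 h2 => ?_⟩
        have := hgap r h1 h2
        by_cases hrj : r = j
        · rw [hrj]; exact hcj
        · rwa [hc'other r (by omega) hrj] at this
  -- the injection
  have hmaps : ∀ p ∈ S, (if p ∈ B' then p else j) ∈ B' := by
    intro p hp
    by_cases hb : p ∈ B'
    · rw [if_pos hb]; exact hb
    · rw [if_neg hb]; exact (key p hp hb).2.2
  have hinj : Set.InjOn (fun p => if p ∈ B' then p else j) S := by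
    intro a ha b hb hab
    by_cases h1 : a ∈ B' <;> by_cases h2 : b ∈ B' <;>
      simp only [h1, h2, if_true, if_false] at hab
    · exact hab
    · exfalso; have := ha.1.1; rw [hab, hcj] at this; simp at this
    · exfalso; have := hb.1.1; rw [← hab, hcj] at this; simp at this
    · obtain ⟨haj, hga, _⟩ := key a ha h1
      obtain ⟨hbj, hgb, _⟩ := key b hb h2
      by_contra hne
      have hai : a ≠ i := fun e => ha.2 (Or.inl e)
      have hbi : b ≠ i := fun e => hb.2 (Or.inl e)
      rcases lt_or_gt_of_ne hne with hh | hh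
      · have := hga b hh hbj hbi
        have h2 := hb.1.1; rw [this] at h2; simp at h2
      · have := hgb a hh haj hai
        have h2 := ha.1.1; rw [this] at h2; simp at h2
  have hcard1 : S.ncard ≤ B'.ncard :=
    Set.ncard_le_ncard_of_injOn _ hmaps hinj hB'fin
  have hPfin : P.Finite := hBfin.subset (fun p hp => hp.1)
  have hSfin : S.Finite := hBfin.subset (fun p hp => hp.1)
  have hPcard : P.ncard ≤ 1 := by
    rcases hPsub.eq_empty_or_singleton with he | ⟨a, he⟩
    · rw [he]; simp
    · rw [he]; simp
  have hSub : B ⊆ S ∪ ({i} ∪ P) := by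
    intro p hp
    by_cases h : p ∈ ({i} ∪ P : Set ℤ)
    · exact Or.inr h
    · exact Or.inl ⟨hp, h⟩
  have hc2 : B.ncard ≤ (S ∪ ({i} ∪ P)).ncard :=
    Set.ncard_le_ncard hSub (hSfin.union ((Set.finite_singleton i).union hPfin))
  have hc3 : (S ∪ ({i} ∪ P)).ncard ≤ S.ncard + ({i} ∪ P : Set ℤ).ncard :=
    Set.ncard_union_le _ _
  have hc4 : ({i} ∪ P : Set ℤ).ncard ≤ 1 + P.ncard := by
    have := Set.ncard_union_le ({i} : Set ℤ) P
    simpa using this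
  rw [disorder_eq_bad, disorder_eq_bad, ← hB, ← hB']
  omega


lemma finsupp_alt (n : ℕ) : FinSupp (altConfig n) := by
  apply Set.Finite.subset (Set.finite_Icc (1 : ℤ) n)
  intro p hp
  simp only [Set.mem_setOf_eq, altConfig] at hp
  by_cases h : 1 ≤ p ∧ p ≤ (n : ℤ)
  · exact Set.mem_Icc.mpr h
  · rw [if_neg h] at hp; simp at hp

lemma finsupp_move {c c' : ℤ → Option Bool} (hfin : FinSupp c)
    (h : BergeMove 1 c c') : FinSupp c' := by
  obtain ⟨i, j, hm⟩ := h
  obtain ⟨hij, hci, hcj, hc'⟩ := moveTo_one_spec hm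
  apply Set.Finite.subset (hfin.union (Set.finite_singleton j))
  intro p hp
  simp only [Set.mem_setOf_eq] at hp
  rw [hc' p] at hp
  by_cases hpj : p = j
  · exact Or.inr hpj
  · rw [if_neg hpj] at hp
    by_cases hpi : p = i
    · rw [if_pos hpi] at hp; simp at hp
    · rw [if_neg hpi] at hp; exact Or.inl hp

lemma disorder_alt (n : ℕ) : disorder (altConfig n) = n := by
  rw [disorder_eq_bad]
  have hB : Bad (altConfig n) = Set.Icc (1 : ℤ) n := by
    ext p
    simp only [Bad, Set.mem_setOf_eq, Set.mem_Icc]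
    constructor
    · rintro ⟨h1, -⟩
      simp only [altConfig] at h1
      by_cases h : 1 ≤ p ∧ p ≤ (n : ℤ)
      · exact h
      · rw [if_neg h] at h1; simp at h1
    · rintro ⟨h1, h2⟩
      have hcp : altConfig n p = some (decide (p % 2 = 1)) := by
        simp only [altConfig]; rw [if_pos ⟨h1, h2⟩]
      refine ⟨by rw [hcp]; simp, ?_⟩
      rintro ⟨q, hpq, hq, hgap⟩
      rw [hcp] at hq
      by_cases hqr : 1 ≤ q ∧ q ≤ (n : ℤ)
      · have hcq : altConfig n q = some (decide (q % 2 = 1)) := by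
          simp only [altConfig]; rw [if_pos hqr]
        rw [hcq] at hq
        simp only [Option.some.injEq, decide_eq_decide] at hq
        have hq2 : q ≥ p + 2 := by omega
        have := hgap (p + 1) (by omega) (by omega)
        simp only [altConfig] at this
        rw [if_pos (by omega : 1 ≤ p + 1 ∧ p + 1 ≤ (n : ℤ))] at this
        simp at this
      · have : altConfig n q = none := by simp only [altConfig]; rw [if_neg hqr]
        rw [this] at hq; simp at hq
  rw [hB, ← Finset.coe_Icc, Set.ncard_coe_finset, Int.card_Icc]
  omega

lemma disorder_sorted {n : ℕ} {c : ℤ → Option Bool} (hn : 1 ≤ n) (h : IsSorted n c) :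
    disorder c ≤ 2 := by
  classical
  obtain ⟨j, w, hsupp, h1, h2⟩ := h
  rw [disorder_eq_bad]
  have hsub : Bad c ⊆ {j + (((n + 1) / 2 : ℕ) : ℤ) - 1, j + (n : ℤ) - 1} := by
    intro p hp
    obtain ⟨hpo, hpbad⟩ := hp
    have hrange : j ≤ p ∧ p < j + (n : ℤ) := (hsupp p).1 hpo
    have hhalf : 1 ≤ ((n + 1) / 2 : ℕ) := by omega
    by_cases hpa : p = j + (((n + 1) / 2 : ℕ) : ℤ) - 1
    · exact Or.inl hpa
    · right
      show p = j + (n : ℤ) - 1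
      by_contra hpb
      apply hpbad
      refine ⟨p + 1, by omega, ?_, fun r hr1 hr2 => by omega⟩
      by_cases hfirst : p < j + (((n + 1) / 2 : ℕ) : ℤ) - 1
      · rw [h1 p hrange.1 (by omega), h1 (p + 1) (by omega) (by omega)]
      · have hge : j + (((n + 1) / 2 : ℕ) : ℤ) ≤ p := by omega
        rw [h2 p hge hrange.2, h2 (p + 1) (by omega) (by omega)]
  calc (Bad c).ncard ≤ ({j + (((n + 1) / 2 : ℕ) : ℤ) - 1, j + (n : ℤ) - 1} : Set ℤ).ncard :=
        Set.ncard_le_ncard hsub ((Set.finite_singleton _).insert _)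
    _ ≤ ({j + (n : ℤ) - 1} : Set ℤ).ncard + 1 := Set.ncard_insert_le _ _
    _ ≤ 2 := by rw [Set.ncard_singleton]

lemma chain (n m : ℕ) (f : ℕ → ℤ → Option Bool) (h0 : FinSupp (f 0))
    (hmov : ∀ i < m, BergeMove 1 (f i) (f (i + 1))) :
    disorder (f 0) ≤ disorder (f m) + 2 * m ∧ FinSupp (f m) := by
  induction m with
  | zero => exact ⟨by omega, h0⟩
  | succ m ih =>
      obtain ⟨hd, hfin⟩ := ih (fun i hi => hmov i (by omega))
      have := drop2 hfin (hmov m (by omega))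
      exact ⟨by omega, finsupp_move hfin (hmov m (by omega))⟩

lemma lower_bound {n m : ℕ} (hn : 1 ≤ n) (h : SortsIn 1 n m) : n ≤ 2 + 2 * m := by
  obtain ⟨f, hf0, hmov, hsort⟩ := h
  have h0fin : FinSupp (f 0) := by rw [hf0]; exact finsupp_alt n
  obtain ⟨hd, -⟩ := chain n m f h0fin hmov
  have h1 : disorder (f 0) = n := by rw [hf0]; exact disorder_alt n
  have h2 : disorder (f m) ≤ 2 := disorder_sorted hn hsort
  omega

-- upper bound construction
def cfgHole (i t : ℕ) : ℤ :=
  if t = 2 * i + 1 then 4 * (i : ℤ) + 3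
  else if t % 2 = 1 then 4 * (i : ℤ) + 2 - t else (t : ℤ)

def cfg (i t : ℕ) : ℤ → Option Bool := fun p =>
  if 0 ≤ p ∧ p ≤ 4 * (i : ℤ) + 3 ∧ p ≠ cfgHole i t
  then some (decide (p ≤ (t : ℤ) ∨ (p % 2 = 1 ∧ p ≤ 4 * (i : ℤ) + 1 - t) ∨
    p = 4 * (i : ℤ) + 3))
  else none

lemma cfg_zero (i : ℕ) : cfg i 0 = altConfig (4 * i + 3) := by
  funext p
  have hh : cfgHole i 0 = 0 := by simp [cfgHole]
  simp only [cfg, altConfig, hh]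
  push_cast
  split_ifs with h1 h2 <;> first | rfl | (exfalso; omega) |
    (congr 1; rw [decide_eq_decide]; (try simp only [or_true, true_or, and_true, true_and, or_false, false_or, and_false, false_and, iff_true, true_iff, iff_false, false_iff, not_or, not_and]); first | trivial | omega)

lemma moveTo_one_intro {a b : ℤ} {c c' : ℤ → Option Bool}
    (hsep : b + 1 ≤ a ∨ a + 1 ≤ b) (ha : (c a).isSome) (hb : c b = none)
    (hval : ∀ p, c' p = if p = b then c a else if p = a then none else c p) :
    MoveTo 1 a b c c' := by
  refine ⟨by push_cast; omega, fun t ht1 ht2 => ?_, ?_⟩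
  · have ht : t = 0 := by
      have : t < ((1 : ℕ) : ℤ) := ht2
      push_cast at this; omega
    subst ht
    rw [add_zero, add_zero]
    exact ⟨ha, hb⟩
  · funext p
    rw [hval p]
    show _ = (if b ≤ p ∧ p < b + ((1 : ℕ) : ℤ) then c (a + (p - b))
      else if a ≤ p ∧ p < a + ((1 : ℕ) : ℤ) then none else c p)
    push_cast
    split_ifs <;> first | rfl | omega | (congr 1; omega) | (exfalso; omega)

lemma cfg_step (i t : ℕ) (ht : t < 2 * i + 1) :
    BergeMove 1 (cfg i t) (cfg i (t + 1)) := by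
  rcases Nat.lt_or_ge t (2 * i) with htl | htl
  · rcases Nat.even_or_odd t with ⟨s, hs⟩ | ⟨s, hs⟩
    · -- t even, t < 2i : move 4i+1-t → t
      refine ⟨4 * (i : ℤ) + 1 - t, (t : ℤ), moveTo_one_intro ?_ ?_ ?_ ?_⟩
      · left; omega
      · have hh : cfgHole i t = (t : ℤ) := by
          simp only [cfgHole]; rw [if_neg (by omega), if_neg (by omega)]
        simp only [cfg, hh]
        rw [if_pos (by push_cast; refine ⟨by omega, by omega, by omega⟩)]
        simp
      · have hh : cfgHole i t = (t : ℤ) := by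
          simp only [cfgHole]; rw [if_neg (by omega), if_neg (by omega)]
        simp only [cfg, hh]
        rw [if_neg (by omega)]
      · intro p
        have hh1 : cfgHole i t = (t : ℤ) := by
          simp only [cfgHole]; rw [if_neg (by omega), if_neg (by omega)]
        have hh2 : cfgHole i (t + 1) = 4 * (i : ℤ) + 1 - t := by
          simp only [cfgHole]; rw [if_neg (by omega), if_pos (by omega)]
          push_cast; ring
        simp only [cfg, hh1, hh2]
        push_cast
        split_ifs <;> first | rfl | omega | (exfalso; omega) |
          (congr 1; rw [decide_eq_decide]; (try simp only [or_true, true_or, and_true, true_and, or_false, false_or, and_false, false_and, iff_true, true_iff, iff_false, false_iff, not_or, not_and]); first | trivial | omega)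
    · -- t odd : move t+1 → 4i+2-t
      refine ⟨(t : ℤ) + 1, 4 * (i : ℤ) + 2 - t, moveTo_one_intro ?_ ?_ ?_ ?_⟩
      · right; omega
      · have hh : cfgHole i t = 4 * (i : ℤ) + 2 - t := by
          simp only [cfgHole]; rw [if_neg (by omega), if_pos (by omega)]
        simp only [cfg, hh]
        rw [if_pos (by push_cast; refine ⟨by omega, by omega, by omega⟩)]
        simp
      · have hh : cfgHole i t = 4 * (i : ℤ) + 2 - t := by
          simp only [cfgHole]; rw [if_neg (by omega), if_pos (by omega)]
        simp only [cfg, hh]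
        rw [if_neg (by omega)]
      · intro p
        have hh1 : cfgHole i t = 4 * (i : ℤ) + 2 - t := by
          simp only [cfgHole]; rw [if_neg (by omega), if_pos (by omega)]
        have hh2 : cfgHole i (t + 1) = (t : ℤ) + 1 := by
          simp only [cfgHole]; rw [if_neg (by omega), if_neg (by omega)]
          push_cast; ring
        simp only [cfg, hh1, hh2]
        push_cast
        split_ifs <;> first | rfl | omega | (exfalso; omega) |
          (congr 1; rw [decide_eq_decide]; (try simp only [or_true, true_or, and_true, true_and, or_false, false_or, and_false, false_and, iff_true, true_iff, iff_false, false_iff, not_or, not_and]); first | trivial | omega)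
  · -- t = 2i : move 4i+3 → 2i
    have ht2 : t = 2 * i := by omega
    subst ht2
    refine ⟨4 * (i : ℤ) + 3, 2 * (i : ℤ), moveTo_one_intro ?_ ?_ ?_ ?_⟩
    · left; omega
    · have hh : cfgHole i (2 * i) = 2 * (i : ℤ) := by
        simp only [cfgHole]; rw [if_neg (by omega), if_neg (by omega)]
        push_cast; ring
      simp only [cfg, hh]
      rw [if_pos (by push_cast; refine ⟨by omega, by omega, by omega⟩)]
      simp
    · have hh : cfgHole i (2 * i) = 2 * (i : ℤ) := by
        simp only [cfgHole]; rw [if_neg (by omega), if_neg (by omega)]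
        push_cast; ring
      simp only [cfg, hh]
      rw [if_neg (by omega)]
    · intro p
      have hh1 : cfgHole i (2 * i) = 2 * (i : ℤ) := by
        simp only [cfgHole]; rw [if_neg (by omega), if_neg (by omega)]
        push_cast; ring
      have hh2 : cfgHole i (2 * i + 1) = 4 * (i : ℤ) + 3 := by
        simp [cfgHole]
      simp only [cfg, hh1, hh2]
      push_cast
      split_ifs <;> first | rfl | omega | (exfalso; omega) |
        (congr 1; rw [decide_eq_decide]; (try simp only [or_true, true_or, and_true, true_and, or_false, false_or, and_false, false_and, iff_true, true_iff, iff_false, false_iff, not_or, not_and]); first | trivial | omega)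

lemma cfg_sorted (i : ℕ) : IsSorted (4 * i + 3) (cfg i (2 * i + 1)) := by
  have hh : cfgHole i (2 * i + 1) = 4 * (i : ℤ) + 3 := by
    simp [cfgHole]
  have hhalf : (((4 * i + 3 + 1) / 2 : ℕ) : ℤ) = 2 * (i : ℤ) + 2 := by
    push_cast [Nat.add_mul_div_left]; omega
  refine ⟨0, true, fun p => ?_, fun p h1 h2 => ?_, fun p h1 h2 => ?_⟩
  · simp only [cfg, hh]
    constructor
    · intro h
      by_cases hc : 0 ≤ p ∧ p ≤ 4 * (i : ℤ) + 3 ∧ p ≠ 4 * (i : ℤ) + 3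
      · push_cast; omega
      · rw [if_neg hc] at h; simp at h
    · intro h
      rw [if_pos (by push_cast at h ⊢; omega)]
      simp
  · rw [hhalf] at h2
    simp only [cfg, hh]
    rw [if_pos (by omega)]
    congr 1
    rw [decide_eq_true_eq]
    push_cast
    omega
  · rw [hhalf] at h1
    push_cast at h2
    simp only [cfg, hh]
    rw [if_pos (by omega)]
    congr 1
    rw [Bool.not_true, decide_eq_false_iff_not]
    push_cast
    omega

lemma upper (n : ℕ) (hn : 3 ≤ n) (hmod : n % 4 = 3) : SortsIn 1 n (n / 2) := by
  obtain ⟨i, hi⟩ : ∃ i, n = 4 * i + 3 := ⟨n / 4, by omega⟩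
  subst hi
  have hm : (4 * i + 3) / 2 = 2 * i + 1 := by omega
  rw [hm]
  exact ⟨cfg i, cfg_zero i, fun t htl => cfg_step i t htl, cfg_sorted i⟩

theorem h_one_moves_eq_floor (n : ℕ) (hn : 3 ≤ n) (hmod : n % 4 = 3) :
    IsLeast {m : ℕ | SortsIn 1 n m} (n / 2) := by
  constructor
  · exact upper n hn hmod
  · intro m hm
    have := lower_bound (by omega) hm
    omega
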